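/- Every orbit of a rotation group D on V \ {0} meets every ray in exactly one point. -/

import Mathlib

/-- The ray (half-line) spanned by `v`: all nonnegative multiples of `v`. -/
def Ray' {V : Type*} [AddCommGroup V] [Module ℝ V] (v : V) : Set V :=
  {x | ∃ c : ℝ, 0 ≤ c ∧ x = c • v}

/-- The half-plane `ℝ v + ℝ≥0 w`. -/
def HalfPlane {V : Type*} [AddCommGroup V] [Module ℝ V] (v w : V) : Set V :=
  {x | ∃ a b : ℝ, 0 ≤ b ∧ x = a • v + b • w}

/-- `D` is a rotation group: for any two pairs of (half-plane, ray on its boundary)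
there is exactly one element of `D` mapping the first pair to the second. -/
def IsRotationGroup {V : Type*} [AddCommGroup V] [Module ℝ V]
    (D : Subgroup (V ≃ₗ[ℝ] V)) : Prop :=
  ∀ v w v' w' : V, LinearIndependent ℝ ![v, w] → LinearIndependent ℝ ![v', w'] →
    ∃! d : V ≃ₗ[ℝ] V, d ∈ D ∧
      (d : V ≃ₗ[ℝ] V) '' HalfPlane v w = HalfPlane v' w' ∧
      (d : V ≃ₗ[ℝ] V) '' Ray' v = Ray' v'

/-- `w ⊥ v` : some rotation sends `w` to `-w` and fixes `v`. -/
def Perp {V : Type*} [AddCommGroup V] [Module ℝ V]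
    (D : Subgroup (V ≃ₗ[ℝ] V)) (w v : V) : Prop :=
  ∃ r ∈ D, r w = -w ∧ r v = v

namespace Stmt9Aux

variable {V : Type*} [AddCommGroup V] [Module ℝ V]

lemma mul_app (e f : V ≃ₗ[ℝ] V) (x : V) : (e * f) x = e (f x) := rfl
lemma one_app (x : V) : (1 : V ≃ₗ[ℝ] V) x = x := rfl
lemma inv_app (e : V ≃ₗ[ℝ] V) (x : V) : (e⁻¹ : V ≃ₗ[ℝ] V) x = e.symm x := rfl

lemma image_hp (d : V ≃ₗ[ℝ] V) (v w : V) :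
    ⇑d '' HalfPlane v w = HalfPlane (d v) (d w) := by
  ext x
  constructor
  · rintro ⟨y, ⟨a, b, hb, rfl⟩, rfl⟩
    exact ⟨a, b, hb, by simp⟩
  · rintro ⟨a, b, hb, rfl⟩
    exact ⟨a • v + b • w, ⟨a, b, hb, rfl⟩, by simp⟩

lemma image_ray (d : V ≃ₗ[ℝ] V) (v : V) :
    ⇑d '' Ray' v = Ray' (d v) := by
  ext x
  constructor
  · rintro ⟨y, ⟨c, hc, rfl⟩, rfl⟩
    exact ⟨c, hc, by simp⟩
  · rintro ⟨c, hc, rfl⟩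
    exact ⟨c • v, ⟨c, hc, rfl⟩, by simp⟩

lemma ray_smul {c : ℝ} (hc : 0 < c) (v : V) : Ray' (c • v) = Ray' v := by
  ext x
  constructor
  · rintro ⟨t, ht, rfl⟩
    exact ⟨t * c, mul_nonneg ht hc.le, by rw [smul_smul]⟩
  · rintro ⟨t, ht, rfl⟩
    refine ⟨t / c, div_nonneg ht hc.le, ?_⟩
    rw [smul_smul, div_mul_cancel₀ _ hc.ne']

lemma hp_smul_left {c : ℝ} (hc : c ≠ 0) (v w : V) :
    HalfPlane (c • v) w = HalfPlane v w := by
  ext x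
  constructor
  · rintro ⟨a, b, hb, rfl⟩
    exact ⟨a * c, b, hb, by rw [smul_smul]⟩
  · rintro ⟨a, b, hb, rfl⟩
    exact ⟨a / c, b, hb, by rw [smul_smul, div_mul_cancel₀ _ hc]⟩

lemma hp_smul_right {c : ℝ} (hc : 0 < c) (v w : V) :
    HalfPlane v (c • w) = HalfPlane v w := by
  ext x
  constructor
  · rintro ⟨a, b, hb, rfl⟩
    exact ⟨a, b * c, mul_nonneg hb hc.le, by rw [smul_smul]⟩
  · rintro ⟨a, b, hb, rfl⟩
    exact ⟨a, b / c, div_nonneg hb hc.le, by rw [smul_smul, div_mul_cancel₀ _ hc.ne']⟩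

lemma hp_shear (v w : V) (t : ℝ) : HalfPlane v (w + t • v) = HalfPlane v w := by
  ext x
  constructor
  · rintro ⟨a, b, hb, rfl⟩
    exact ⟨a + b * t, b, hb, by module⟩
  · rintro ⟨a, b, hb, rfl⟩
    exact ⟨a - b * t, b, hb, by module⟩

lemma hp_neg_left (v w : V) : HalfPlane (-v) w = HalfPlane v w := by
  have h : (-1 : ℝ) • v = -v := by simp
  rw [← h, hp_smul_left (by norm_num)]

lemma self_mem_ray (v : V) : v ∈ Ray' v := ⟨1, zero_le_one, (one_smul ℝ v).symm⟩

lemma snd_mem_hp (v w : V) : w ∈ HalfPlane v w := ⟨0, 1, zero_le_one, by simp⟩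

lemma li_zero {x y : V} (h : LinearIndependent ℝ ![x, y]) {s t : ℝ}
    (e : s • x + t • y = 0) : s = 0 ∧ t = 0 :=
  LinearIndependent.pair_iff.mp h s t e

lemma li_of {x y : V} (h : ∀ s t : ℝ, s • x + t • y = 0 → s = 0 ∧ t = 0) :
    LinearIndependent ℝ ![x, y] := LinearIndependent.pair_iff.mpr h

lemma li_neg_right {x y : V} (h : LinearIndependent ℝ ![x, y]) :
    LinearIndependent ℝ ![x, -y] := by
  refine li_of fun s t hst => ?_
  have h2 := li_zero h (s := s) (t := -t) (by linear_combination (norm := module) hst)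
  exact ⟨h2.1, by linarith [h2.2]⟩

lemma li_neg_left {x y : V} (h : LinearIndependent ℝ ![x, y]) :
    LinearIndependent ℝ ![-x, y] := by
  refine li_of fun s t hst => ?_
  have h2 := li_zero h (s := -s) (t := t) (by linear_combination (norm := module) hst)
  exact ⟨by linarith [h2.1], h2.2⟩

lemma li_left_ne_zero {x y : V} (h : LinearIndependent ℝ ![x, y]) : x ≠ 0 := by
  intro hx
  have := (li_zero h (s := 1) (t := 0) (by rw [hx]; module)).1
  norm_num at this

lemma not_li {x z : V} (hx : x ≠ 0) (h : ¬ LinearIndependent ℝ ![x, z]) :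
    ∃ t : ℝ, z = t • x := by
  rw [LinearIndependent.pair_iff] at h
  push_neg at h
  obtain ⟨s, t, e, hne⟩ := h
  by_cases ht : t = 0
  · subst ht
    simp only [zero_smul, add_zero, smul_eq_zero] at e
    rcases e with e | e
    · exact absurd rfl (hne e)
    · exact absurd e hx
  · refine ⟨-(s / t), ?_⟩
    have key : t • (z - (-(s / t)) • x) = 0 := by
      rw [smul_sub, smul_smul]
      have : t * -(s / t) = -s := by field_simp
      rw [this]
      linear_combination (norm := module) e
    rcases smul_eq_zero.mp key with h' | h'
    · exact absurd h' ht
    · linear_combination (norm := module) h'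

lemma flag_eq {D : Subgroup (V ≃ₗ[ℝ] V)} (hD : IsRotationGroup D) {x y x' y' : V}
    (h : LinearIndependent ℝ ![x, y]) (h' : LinearIndependent ℝ ![x', y'])
    {d₁ d₂ : V ≃ₗ[ℝ] V} (m₁ : d₁ ∈ D) (m₂ : d₂ ∈ D)
    (hp₁ : HalfPlane (d₁ x) (d₁ y) = HalfPlane x' y') (hr₁ : Ray' (d₁ x) = Ray' x')
    (hp₂ : HalfPlane (d₂ x) (d₂ y) = HalfPlane x' y') (hr₂ : Ray' (d₂ x) = Ray' x') :
    d₁ = d₂ := by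
  obtain ⟨d, _, hu⟩ := hD x y x' y' h h'
  rw [hu d₁ ⟨m₁, by rw [image_hp]; exact hp₁, by rw [image_ray]; exact hr₁⟩,
      hu d₂ ⟨m₂, by rw [image_hp]; exact hp₂, by rw [image_ray]; exact hr₂⟩]

lemma eigen2 {a b c d : ℝ} (h : a * d - b * c < 0) :
    ∃ μ x y : ℝ, 0 < μ ∧ (x ≠ 0 ∨ y ≠ 0) ∧ a * x + b * y = μ * x ∧
      c * x + d * y = μ * y := by
  by_cases hb : b = 0
  · subst hb
    rw [zero_mul, sub_zero] at h
    by_cases ha : 0 < a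
    · have hd : d < 0 := by
        by_contra hd'
        exact absurd h (not_lt.mpr (mul_nonneg ha.le (not_lt.mp hd')))
      refine ⟨a, a - d, c, ha, Or.inl (by linarith), by ring, by ring⟩
    · have ha' : a ≤ 0 := not_lt.mp ha
      have hd : 0 < d := by
        by_contra hd'
        have : 0 ≤ a * d := by
          have := mul_nonneg (neg_nonneg.mpr ha') (neg_nonneg.mpr (not_lt.mp hd'))
          nlinarith [this]
        linarith
      exact ⟨d, 0, 1, hd, Or.inr one_ne_zero, by ring, by ring⟩
  · set s : ℝ := Real.sqrt ((a + d) ^ 2 - 4 * (a * d - b * c)) with hs_def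
    have hDpos : (0:ℝ) < (a + d) ^ 2 - 4 * (a * d - b * c) := by nlinarith [sq_nonneg (a + d)]
    have hs2 : s ^ 2 = (a + d) ^ 2 - 4 * (a * d - b * c) := Real.sq_sqrt hDpos.le
    have hsT : |a + d| < s := by
      rw [← Real.sqrt_sq_eq_abs]
      exact Real.sqrt_lt_sqrt (sq_nonneg _) (by linarith)
    have hμpos : 0 < (a + d + s) / 2 := by
      have := neg_abs_le (a + d)
      linarith
    refine ⟨(a + d + s) / 2, b, (a + d + s) / 2 - a, hμpos, Or.inl hb, by ring, ?_⟩
    have hμ : ((a + d + s) / 2) ^ 2 - (a + d) * ((a + d + s) / 2) + (a * d - b * c) = 0 := by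
      linear_combination hs2 / 4
    linear_combination -hμ

end Stmt9Aux

namespace Stmt9Aux

set_option maxHeartbeats 2000000 in
lemma eigen_one {V : Type*} [AddCommGroup V] [Module ℝ V]
    (hdim : Module.finrank ℝ V = 3)
    {D : Subgroup (V ≃ₗ[ℝ] V)} (hD : IsRotationGroup D)
    {g : V ≃ₗ[ℝ] V} (hg : g ∈ D) {u : V} (hu : u ≠ 0)
    {l : ℝ} (hl : 0 < l) (hgu : g u = l • u) : l = 1 := by
  have hfd : FiniteDimensional ℝ V := .of_finrank_pos (by rw [hdim]; norm_num)
  -- pick w independent from u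
  obtain ⟨w, hwsp⟩ : ∃ w, w ∉ Submodule.span ℝ (Set.range ![u]) := by
    by_contra hc
    push_neg at hc
    have htop : Submodule.span ℝ (Set.range ![u]) = ⊤ := Submodule.eq_top_iff'.mpr hc
    have := finrank_le_of_span_eq_top htop
    rw [hdim] at this
    simp at this
  have huw : LinearIndependent ℝ ![u, w] := by
    refine li_of fun s t hst => ?_
    by_cases ht : t = 0
    · subst ht
      simp only [zero_smul, add_zero, smul_eq_zero] at hst
      rcases hst with h' | h'
      · exact ⟨h', rfl⟩
      · exact absurd h' hu
    · exfalso
      apply hwsp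
      have hw : w = (-(s / t)) • u := by
        have key : t • (w - (-(s / t)) • u) = 0 := by
          rw [smul_sub, smul_smul]
          have : t * -(s / t) = -s := by field_simp
          rw [this]
          linear_combination (norm := module) hst
        rcases smul_eq_zero.mp key with h' | h'
        · exact absurd h' ht
        · linear_combination (norm := module) h'
      rw [hw]
      exact Submodule.smul_mem _ _ (Submodule.subset_span (by simp))
  -- pick w₂ outside span {u, w}
  obtain ⟨w₂, hw₂sp⟩ : ∃ w₂, w₂ ∉ Submodule.span ℝ (Set.range ![u, w]) := by
    by_contra hc
    push_neg at hc
    have htop : Submodule.span ℝ (Set.range ![u, w]) = ⊤ := Submodule.eq_top_iff'.mpr hc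
    have := finrank_le_of_span_eq_top htop
    rw [hdim] at this
    simp at this
  have hmemuw : ∀ x : V, x ∈ Submodule.span ℝ (Set.range ![u, w]) ↔
      ∃ a b : ℝ, x = a • u + b • w := by
    intro x
    rw [Submodule.mem_span_range_iff_exists_fun]
    constructor
    · rintro ⟨c, hc⟩
      exact ⟨c 0, c 1, by rw [← hc]; simp [Fin.sum_univ_two]⟩
    · rintro ⟨a, b, rfl⟩
      exact ⟨![a, b], by simp [Fin.sum_univ_two]⟩
  -- the half-turn r about the ray of u (within plane (u,w))
  obtain ⟨r, ⟨hrD, hrhp, hrray⟩, -⟩ := hD u w u (-w) huw (li_neg_right huw)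
  rw [image_hp] at hrhp
  rw [image_ray] at hrray
  -- r u = c • u with c > 0
  obtain ⟨c, hc0, hruc⟩ : r u ∈ Ray' u := by
    rw [← hrray]; exact self_mem_ray _
  have hcne : c ≠ 0 := by
    intro h0
    rw [h0, zero_smul] at hruc
    exact hu ((LinearEquiv.map_eq_zero_iff r).mp hruc)
  have hcpos : 0 < c := lt_of_le_of_ne hc0 (Ne.symm hcne)
  -- r w = a • u - b • w with b > 0
  obtain ⟨a, b, hb0, hrwab⟩ : r w ∈ HalfPlane u (-w) := by
    rw [← hrhp]; exact snd_mem_hp _ _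
  have hrw0 : r w = a • u - b • w := by rw [hrwab]; module
  have hbne : b ≠ 0 := by
    intro h0
    rw [h0, zero_smul, sub_zero] at hrw0
    have key : r (w - (a / c) • u) = 0 := by
      rw [map_sub, map_smul, hrw0, hruc, smul_smul, div_mul_cancel₀ _ hcne, sub_self]
    have h1 : w - (a / c) • u = 0 := (LinearEquiv.map_eq_zero_iff r).mp key
    have h2 := (li_zero huw (s := -(a / c)) (t := 1)
      (by linear_combination (norm := module) h1)).2
    norm_num at h2
  have hbpos : 0 < b := lt_of_le_of_ne hb0 (Ne.symm hbne)
  -- r ∘ r = 1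
  have hrr1 : r * r = 1 := by
    refine flag_eq hD huw huw (D.mul_mem hrD hrD) D.one_mem ?_ ?_ rfl rfl
    · have e1 : (r * r) u = (c * c) • u := by
        rw [mul_app, hruc, map_smul, hruc, smul_smul]
      have e2 : (r * r) w = (b * b) • w + (a * c - b * a) • u := by
        rw [mul_app, hrw0, map_sub, map_smul, map_smul, hruc, hrw0]
        module
      rw [e1, e2, hp_smul_left (mul_ne_zero hcne hcne), hp_shear,
        hp_smul_right (mul_pos hbpos hbpos)]
    · rw [mul_app, hruc, map_smul, hruc, smul_smul, ray_smul (mul_pos hcpos hcpos)]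
  have hrr : ∀ x, r (r x) = x := by
    intro x
    have := congrArg (fun d : V ≃ₗ[ℝ] V => d x) hrr1
    simpa [mul_app, one_app] using this
  -- c = 1 and b = 1
  have hc1 : c = 1 := by
    have e1 : (c * c) • u = u := by
      rw [← smul_smul, ← hruc, ← map_smul, ← hruc, hrr]
    have : (c * c - 1) • u = 0 := by linear_combination (norm := module) e1
    rcases smul_eq_zero.mp this with h' | h'
    · rcases mul_self_eq_one_iff.mp (show c * c = 1 by linarith) with h'' | h''
      · exact h''
      · exfalso; rw [h''] at hcpos; norm_num at hcpos
    · exact absurd h' hu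
  rw [hc1, one_smul] at hruc
  have hb1 : b = 1 := by
    have e1 : r (r w) = (b * b) • w + (a - b * a) • u := by
      rw [hrw0, map_sub, map_smul, map_smul, hruc, hrw0]; module
    rw [hrr] at e1
    have h2 := li_zero huw (s := a - b * a) (t := b * b - 1)
      (by linear_combination (norm := module) -e1)
    rcases mul_self_eq_one_iff.mp (show b * b = 1 by linarith [h2.2]) with h'' | h''
    · exact h''
    · exfalso; rw [h''] at hbpos; norm_num at hbpos
  rw [hb1, one_smul] at hrw0
  -- fixed vectors of r are multiples of u
  have hfix : ∀ z, r z = z → ∃ t : ℝ, z = t • u := by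
    intro z hz
    by_cases hli : LinearIndependent ℝ ![u, z]
    · exfalso
      have : r = 1 := flag_eq hD hli hli hrD D.one_mem
        (by rw [hruc, hz]) (by rw [hruc]) rfl rfl
      have hww : r w = w := by rw [this]; rfl
      rw [hrw0] at hww
      have h2 := (li_zero huw (s := a) (t := -2)
        (by linear_combination (norm := module) hww)).2
      norm_num at h2
    · exact not_li hu hli
  have hrP : ∀ z : V, ∃ t : ℝ, r z = t • u - z := by
    intro z
    obtain ⟨t, ht⟩ := hfix (z + r z) (by rw [map_add, hrr]; abel)
    exact ⟨t, by linear_combination (norm := module) ht⟩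
  -- conjugation of r by g equals r (so g preserves the (-1)-eigenplane of r)
  have hgiu : (g⁻¹ : V ≃ₗ[ℝ] V) u = l⁻¹ • u := by
    have h1 : g (l⁻¹ • u) = u := by
      rw [map_smul, hgu, smul_smul, inv_mul_cancel₀ hl.ne', one_smul]
    rw [inv_app]
    apply g.injective
    rw [g.apply_symm_apply, h1]
  have hgrg : g * r * g⁻¹ = r := by
    obtain ⟨t, htz⟩ := hrP ((g⁻¹ : V ≃ₗ[ℝ] V) w)
    have egu : (g * r * g⁻¹) u = u := by
      rw [mul_app, mul_app, hgiu, map_smul, hruc, map_smul, hgu, smul_smul,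
        inv_mul_cancel₀ hl.ne', one_smul]
    have egw : (g * r * g⁻¹) w = (t * l) • u - w := by
      rw [mul_app, mul_app, htz, map_sub, map_smul, hgu, smul_smul]
      congr 1
      rw [inv_app, g.apply_symm_apply]
    refine flag_eq hD huw (li_neg_right huw) (D.mul_mem (D.mul_mem hg hrD) (D.inv_mem hg))
      hrD ?_ ?_ ?_ ?_
    · rw [egu, egw]
      have : (t * l) • u - w = -w + (t * l) • u := by module
      rw [this, hp_shear]
    · rw [egu]
    · rw [hruc, hrw0]
      have : a • u - w = -w + a • u := by module
      rw [this, hp_shear]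
    · rw [hruc]
  have hgP : ∀ z, r z = -z → r (g z) = -(g z) := by
    intro z hz
    have h1 := congrArg (fun d : V ≃ₗ[ℝ] V => d (g z)) hgrg
    simp only [mul_app] at h1
    rw [inv_app, g.symm_apply_apply, hz, map_neg] at h1
    rw [← h1]
  -- the half-turn σ about an axis inside the half-plane (u,w)
  obtain ⟨σ, ⟨hσD, hσhp, hσray⟩, -⟩ := hD u w (-u) w huw (li_neg_left huw)
  rw [image_hp] at hσhp
  rw [image_ray] at hσray
  -- σ u = -(c' • u), c' > 0
  obtain ⟨c', hc'0, hσuc⟩ : σ u ∈ Ray' (-u) := by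
    rw [← hσray]; exact self_mem_ray _
  have hσu0 : σ u = -(c' • u) := by rw [hσuc]; module
  have hc'ne : c' ≠ 0 := by
    intro h0
    rw [h0, zero_smul, neg_zero] at hσu0
    exact hu ((LinearEquiv.map_eq_zero_iff σ).mp hσu0)
  have hc'pos : 0 < c' := lt_of_le_of_ne hc'0 (Ne.symm hc'ne)
  -- σ w = q • w - p' • u, q > 0
  obtain ⟨p', q, hq0, hσwpq⟩ : σ w ∈ HalfPlane (-u) w := by
    rw [← hσhp]; exact snd_mem_hp _ _
  have hσw0 : σ w = q • w - p' • u := by rw [hσwpq]; module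
  have hqne : q ≠ 0 := by
    intro h0
    rw [h0, zero_smul, zero_sub] at hσw0
    have key : σ (w - (p' / c') • u) = 0 := by
      rw [map_sub, map_smul, hσw0, hσu0, smul_neg, smul_smul,
        div_mul_cancel₀ _ hc'ne]
      module
    have h1 : w - (p' / c') • u = 0 := (LinearEquiv.map_eq_zero_iff σ).mp key
    have h2 := (li_zero huw (s := -(p' / c')) (t := 1)
      (by linear_combination (norm := module) h1)).2
    norm_num at h2
  have hqpos : 0 < q := lt_of_le_of_ne hq0 (Ne.symm hqne)
  -- σ ∘ σ = 1
  have hσσ1 : σ * σ = 1 := by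
    refine flag_eq hD huw huw (D.mul_mem hσD hσD) D.one_mem ?_ ?_ rfl rfl
    · have e1 : (σ * σ) u = (c' * c') • u := by
        rw [mul_app, hσu0, map_neg, map_smul, hσu0]
        module
      have e2 : (σ * σ) w = (q * q) • w + (p' * c' - q * p') • u := by
        rw [mul_app, hσw0, map_sub, map_smul, map_smul, hσu0, hσw0]
        module
      rw [e1, e2, hp_smul_left (mul_ne_zero hc'ne hc'ne), hp_shear,
        hp_smul_right (mul_pos hqpos hqpos)]
    · have e1 : (σ * σ) u = (c' * c') • u := by
        rw [mul_app, hσu0, map_neg, map_smul, hσu0]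
        module
      rw [e1, ray_smul (mul_pos hc'pos hc'pos)]
  have hσσ : ∀ x, σ (σ x) = x := by
    intro x
    have := congrArg (fun d : V ≃ₗ[ℝ] V => d x) hσσ1
    simpa [mul_app, one_app] using this
  have hc'1 : c' = 1 := by
    have e1 : (c' * c') • u = u := by
      have h' := hσσ u
      rw [hσu0, map_neg, map_smul, hσu0] at h'
      linear_combination (norm := module) h'
    have h2 : (c' * c' - 1) • u = 0 := by linear_combination (norm := module) e1
    rcases smul_eq_zero.mp h2 with h' | h'
    · rcases mul_self_eq_one_iff.mp (show c' * c' = 1 by linarith) with h'' | h''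
      · exact h''
      · exfalso; rw [h''] at hc'pos; norm_num at hc'pos
    · exact absurd h' hu
  rw [hc'1, one_smul] at hσu0
  have hq1 : q = 1 := by
    have e1 : (q * q) • w + (p' * 1 - q * p') • u = w := by
      have h' := hσσ w
      rw [hσw0, map_sub, map_smul, map_smul, hσu0, hσw0] at h'
      linear_combination (norm := module) h'
    have h2 := li_zero huw (s := p' * 1 - q * p') (t := q * q - 1)
      (by linear_combination (norm := module) e1)
    rcases mul_self_eq_one_iff.mp (show q * q = 1 by linarith [h2.2]) with h'' | h''
    · exact h''
    · exfalso; rw [h''] at hqpos; norm_num at hqpos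
  rw [hq1, one_smul] at hσw0
  -- σ r σ = r
  have hσrσ : σ * r * σ = r := by
    have eσu : (σ * r * σ) u = u := by
      rw [mul_app, mul_app, hσu0, map_neg, hruc, map_neg, hσu0, neg_neg]
    have h1 : r (σ w) = (a - p') • u - w := by
      rw [hσw0, map_sub, map_smul, hruc, hrw0]; module
    have eσw : (σ * r * σ) w = (2 * p' - a) • u - w := by
      simp only [mul_app]
      rw [h1, map_sub, map_smul, hσu0, hσw0]
      module
    refine flag_eq hD huw (li_neg_right huw)
      (D.mul_mem (D.mul_mem hσD hrD) hσD) hrD ?_ ?_ ?_ ?_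
    · rw [eσu, eσw]
      have : (2 * p' - a) • u - w = -w + (2 * p' - a) • u := by module
      rw [this, hp_shear]
    · rw [eσu]
    · rw [hruc, hrw0]
      have : a • u - w = -w + a • u := by module
      rw [this, hp_shear]
    · rw [hruc]
  have hσP : ∀ z, r z = -z → r (σ z) = -(σ z) := by
    intro z hz
    have h1 := congrArg (fun d : V ≃ₗ[ℝ] V => d (σ z)) hσrσ
    simp only [mul_app] at h1
    rw [hσσ, hz, map_neg] at h1
    rw [← h1]
  -- the (-1)-eigenvector f of r inside the plane (u,w)
  set f : V := w - (a / 2) • u with hf_def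
  have hrf : r f = -f := by
    rw [hf_def, map_sub, map_smul, hruc, hrw0]; module
  have hσfe : σ f = w + (a / 2 - p') • u := by
    rw [hf_def, map_sub, map_smul, hσw0, hσu0]; module
  have hpa : p' = a := by
    have l1 : r (σ f) = a • u - w + (a / 2 - p') • u := by
      rw [hσfe, map_add, map_smul, hruc, hrw0]
    have e2 := hσP f hrf
    have e3 := l1.symm.trans (e2.trans (congrArg Neg.neg hσfe))
    have h5 : (2 * a - 2 * p') • u = 0 := by linear_combination (norm := module) e3
    rcases smul_eq_zero.mp h5 with h' | h'
    · linarith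
    · exact absurd h' hu
  have hσf : σ f = f := by
    rw [hσfe, hpa, hf_def]; module
  -- the (-1)-eigenvector ty of r outside the plane (u,w)
  obtain ⟨t₂, hrw₂⟩ := hrP w₂
  set ty : V := w₂ - (t₂ / 2) • u with hty_def
  have hrty : r ty = -ty := by
    rw [hty_def, map_sub, map_smul, hruc, hrw₂]; module
  have hfty : LinearIndependent ℝ ![f, ty] := by
    refine li_of fun s t hst => ?_
    rw [hf_def, hty_def] at hst
    by_cases ht : t = 0
    · subst ht
      constructor
      swap
      · rfl
      · by_contra hs
        have hkey : s • (w - (a / 2) • u) = 0 := by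
          linear_combination (norm := module) hst
        rcases smul_eq_zero.mp hkey with h' | h'
        · exact hs h'
        · have h2 := (li_zero huw (s := -(a / 2)) (t := 1)
            (by linear_combination (norm := module) h')).2
          norm_num at h2
    · exfalso
      apply hw₂sp
      rw [hmemuw]
      refine ⟨(s * (a / 2) + t * (t₂ / 2)) / t, -s / t, ?_⟩
      have hkey : t • (w₂ - (((s * (a / 2) + t * (t₂ / 2)) / t) • u + (-s / t) • w)) = 0 := by
        rw [smul_sub, smul_add, smul_smul, smul_smul,
          mul_div_cancel₀ _ ht, mul_div_cancel₀ _ ht]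
        linear_combination (norm := module) hst
      rcases smul_eq_zero.mp hkey with h' | h'
      · exact absurd h' ht
      · exact (sub_eq_zero.mp h')
  -- the triple (w₂, w, u) spans V
  have htriple : LinearIndependent ℝ ![w₂, w, u] := by
    refine Fintype.linearIndependent_iff.mpr fun cc hcc => ?_
    rw [Fin.sum_univ_three] at hcc
    simp only [Matrix.cons_val_zero, Matrix.cons_val_one, Matrix.head_cons,
      Matrix.cons_val_two, Matrix.tail_cons] at hcc
    have hc0 : cc 0 = 0 := by
      by_contra hc0ne
      apply hw₂sp
      rw [hmemuw]
      refine ⟨-(cc 2) / cc 0, -(cc 1) / cc 0, ?_⟩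
      have hkey : cc 0 • (w₂ - ((-(cc 2) / cc 0) • u + (-(cc 1) / cc 0) • w)) = 0 := by
        rw [smul_sub, smul_add, smul_smul, smul_smul,
          mul_div_cancel₀ _ hc0ne, mul_div_cancel₀ _ hc0ne]
        linear_combination (norm := module) hcc
      rcases smul_eq_zero.mp hkey with h' | h'
      · exact absurd h' hc0ne
      · exact (sub_eq_zero.mp h')
    rw [hc0, zero_smul, zero_add] at hcc
    have h2 := li_zero huw (s := cc 2) (t := cc 1)
      (by linear_combination (norm := module) hcc)
    intro i
    fin_cases i
    · exact hc0
    · exact h2.2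
    · exact h2.1
  have htop : Submodule.span ℝ (Set.range ![w₂, w, u]) = ⊤ :=
    htriple.span_eq_top_of_card_eq_finrank (by simp [hdim])
  have hrep : ∀ x : V, ∃ c0 c1 c2 : ℝ, x = c0 • w₂ + c1 • w + c2 • u := by
    intro x
    have hx : x ∈ Submodule.span ℝ (Set.range ![w₂, w, u]) := by
      rw [htop]; trivial
    rw [Submodule.mem_span_range_iff_exists_fun] at hx
    obtain ⟨cc, hcc⟩ := hx
    refine ⟨cc 0, cc 1, cc 2, ?_⟩
    rw [← hcc, Fin.sum_univ_three]
    simp only [Matrix.cons_val_zero, Matrix.cons_val_one, Matrix.head_cons,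
      Matrix.cons_val_two, Matrix.tail_cons]
  -- decomposition of the (-1)-eigenplane of r
  have hdecomp : ∀ x : V, r x = -x → ∃ B C : ℝ, x = B • f + C • ty := by
    intro x hx
    obtain ⟨c0, c1, c2, hcc⟩ := hrep x
    have hrx : r x = c0 • (t₂ • u - w₂) + c1 • (a • u - w) + c2 • u := by
      rw [hcc, map_add, map_add, map_smul, map_smul, map_smul, hrw₂, hrw0, hruc]
    have key : c0 • (t₂ • u - w₂) + c1 • (a • u - w) + c2 • u
        = -(c0 • w₂ + c1 • w + c2 • u) := by
      rw [← hrx, hx, hcc]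
    have hA : (c0 * t₂ + c1 * a + 2 * c2) • u = 0 := by
      linear_combination (norm := module) key
    have hA0 : c0 * t₂ + c1 * a + 2 * c2 = 0 := by
      rcases smul_eq_zero.mp hA with h' | h'
      · exact h'
      · exact absurd h' hu
    refine ⟨c1, c0, ?_⟩
    have hc2 : c2 = -(c0 * t₂ + c1 * a) / 2 := by linarith
    rw [hcc, hf_def, hty_def, hc2]
    module
  -- σ acts on the eigenplane as a reflection: find its (-1)-eigenvector e
  obtain ⟨ρ, s, hσty⟩ := hdecomp (σ ty) (hσP ty hrty)
  have h' := hσσ ty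
  rw [hσty, map_add, map_smul, map_smul, hσf, hσty] at h'
  have hco := li_zero hfty (s := ρ + s * ρ) (t := s * s - 1)
    (by linear_combination (norm := module) h')
  rcases mul_self_eq_one_iff.mp (show s * s = 1 by linarith [hco.2]) with hs1 | hs1
  · exfalso
    have hρ : ρ = 0 := by rw [hs1] at hco; linarith [hco.1]
    have hσty2 : σ ty = ty := by rw [hσty, hρ, hs1]; module
    have hσ1 : σ = 1 := by
      refine flag_eq hD hfty hfty hσD D.one_mem ?_ ?_ rfl rfl
      · rw [hσf, hσty2]
      · rw [hσf]
    have h6 := congrArg (fun d : V ≃ₗ[ℝ] V => d u) hσ1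
    simp only [one_app] at h6
    rw [hσu0] at h6
    have h7 : (2 : ℝ) • u = 0 := by linear_combination (norm := module) -h6
    rcases smul_eq_zero.mp h7 with h8 | h8
    · norm_num at h8
    · exact hu h8
  have hσty' : σ ty = ρ • f - ty := by rw [hσty, hs1]; module
  set e : V := ty - (ρ / 2) • f with he_def
  have hre : r e = -e := by rw [he_def, map_sub, map_smul, hrty, hrf]; module
  have hσe : σ e = -e := by rw [he_def, map_sub, map_smul, hσty', hσf]; module
  have hfe : LinearIndependent ℝ ![f, e] := by
    refine li_of fun s' t' h'' => ?_
    rw [he_def] at h''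
    have h3 := li_zero hfty (s := s' - t' * (ρ / 2)) (t := t')
      (by linear_combination (norm := module) h'')
    have h4 := h3.1
    rw [h3.2, zero_mul] at h4
    exact ⟨by linarith, h3.2⟩
  have hdecomp' : ∀ x : V, r x = -x → ∃ B C : ℝ, x = B • f + C • e := by
    intro x hx
    obtain ⟨B, C, hBC⟩ := hdecomp x hx
    exact ⟨B + C * (ρ / 2), C, by rw [hBC, he_def]; module⟩
  -- the matrix of g on the eigenplane
  obtain ⟨a₁, c₁, hgf⟩ := hdecomp' (g f) (hgP f hrf)
  obtain ⟨b₁, d₁, hge⟩ := hdecomp' (g e) (hgP e hre)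
  have hΔne : a₁ * d₁ - b₁ * c₁ ≠ 0 := by
    intro h0
    have hker : ∀ x y : ℝ, a₁ * x + b₁ * y = 0 → c₁ * x + d₁ * y = 0 →
        x = 0 ∧ y = 0 := by
      intro x y e1 e2
      have hz : g (x • f + y • e) = 0 := by
        rw [map_add, map_smul, map_smul, hgf, hge]
        have h3 : x • (a₁ • f + c₁ • e) + y • (b₁ • f + d₁ • e)
            = (a₁ * x + b₁ * y) • f + (c₁ * x + d₁ * y) • e := by module
        rw [h3, e1, e2]
        module
      exact li_zero hfe ((LinearEquiv.map_eq_zero_iff g).mp hz)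
    by_cases hab : a₁ = 0 ∧ b₁ = 0
    · by_cases hcd : c₁ = 0 ∧ d₁ = 0
      · have hgf0 : g f = 0 := by rw [hgf, hab.1, hcd.1]; simp
        exact (li_left_ne_zero hfty) ((LinearEquiv.map_eq_zero_iff g).mp hgf0)
      · have h1 : a₁ * d₁ + b₁ * (-c₁) = 0 := by rw [hab.1, hab.2]; ring
        have h2 : c₁ * d₁ + d₁ * (-c₁) = 0 := by ring
        have h3 := hker d₁ (-c₁) h1 h2
        exact hcd ⟨by linarith [h3.2], h3.1⟩
    · have h1 : a₁ * b₁ + b₁ * (-a₁) = 0 := by ring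
      have h2 : c₁ * b₁ + d₁ * (-a₁) = 0 := by linear_combination -h0
      have h3 := hker b₁ (-a₁) h1 h2
      exact hab ⟨by linarith [h3.2], h3.1⟩
  rcases lt_or_gt_of_ne hΔne with hΔ | hΔ
  · -- negative determinant : g itself fixes a ray in the eigenplane
    obtain ⟨μ, x, y, hμ, hxy, he1, he2⟩ := eigen2 hΔ
    set z : V := x • f + y • e with hz_def
    have hgz : g z = μ • z := by
      rw [hz_def, map_add, map_smul, map_smul, hgf, hge]
      have h3 : x • (a₁ • f + c₁ • e) + y • (b₁ • f + d₁ • e)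
          = (a₁ * x + b₁ * y) • f + (c₁ * x + d₁ * y) • e := by module
      rw [h3, he1, he2]
      module
    have hz0 : z ≠ 0 := by
      intro h0
      rw [hz_def] at h0
      have h3 := li_zero hfe h0
      rcases hxy with h4 | h4
      · exact h4 h3.1
      · exact h4 h3.2
    have hrz : r z = -z := by
      rw [hz_def, map_add, map_smul, map_smul, hrf, hre]; module
    have hliuz : LinearIndependent ℝ ![u, z] := by
      refine li_of fun s' t' hst => ?_
      have h3 := congrArg (fun v => r v) hst
      simp only [map_add, map_smul, map_zero] at h3
      rw [hruc, hrz] at h3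
      have hs : (2 * s') • u = 0 := by linear_combination (norm := module) hst + h3
      have hs0 : s' = 0 := by
        rcases smul_eq_zero.mp hs with h4 | h4
        · linarith
        · exact absurd h4 hu
      refine ⟨hs0, ?_⟩
      rw [hs0, zero_smul, zero_add] at hst
      rcases smul_eq_zero.mp hst with h4 | h4
      · exact h4
      · exact absurd h4 hz0
    have hg1 : g = 1 := by
      refine flag_eq hD hliuz hliuz hg D.one_mem ?_ ?_ rfl rfl
      · rw [hgu, hgz, hp_smul_left hl.ne', hp_smul_right hμ]
      · rw [hgu, ray_smul hl]
    have h6 := congrArg (fun d : V ≃ₗ[ℝ] V => d u) hg1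
    simp only [one_app] at h6
    rw [hgu] at h6
    have h7 : (l - 1) • u = 0 := by linear_combination (norm := module) h6
    rcases smul_eq_zero.mp h7 with h8 | h8
    · linarith
    · exact absurd h8 hu
  · -- positive determinant : σ ∘ g fixes a ray in the eigenplane
    have hΔ' : a₁ * (-d₁) - b₁ * (-c₁) < 0 := by
      have h3 : a₁ * (-d₁) - b₁ * (-c₁) = -(a₁ * d₁ - b₁ * c₁) := by ring
      rw [h3]; linarith
    obtain ⟨μ, x, y, hμ, hxy, he1, he2⟩ := eigen2 hΔ'
    set z : V := x • f + y • e with hz_def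
    have hgz : g z = (a₁ * x + b₁ * y) • f + (c₁ * x + d₁ * y) • e := by
      rw [hz_def, map_add, map_smul, map_smul, hgf, hge]; module
    have hsgz : σ (g z) = μ • z := by
      rw [hgz, map_add, map_smul, map_smul, hσf, hσe, hz_def, he1,
        show c₁ * x + d₁ * y = -(μ * y) by linear_combination -he2]
      module
    have hz0 : z ≠ 0 := by
      intro h0
      rw [hz_def] at h0
      have h3 := li_zero hfe h0
      rcases hxy with h4 | h4
      · exact h4 h3.1
      · exact h4 h3.2
    have hrz : r z = -z := by
      rw [hz_def, map_add, map_smul, map_smul, hrf, hre]; module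
    have hliuz : LinearIndependent ℝ ![u, z] := by
      refine li_of fun s' t' hst => ?_
      have h3 := congrArg (fun v => r v) hst
      simp only [map_add, map_smul, map_zero] at h3
      rw [hruc, hrz] at h3
      have hs : (2 * s') • u = 0 := by linear_combination (norm := module) hst + h3
      have hs0 : s' = 0 := by
        rcases smul_eq_zero.mp hs with h4 | h4
        · linarith
        · exact absurd h4 hu
      refine ⟨hs0, ?_⟩
      rw [hs0, zero_smul, zero_add] at hst
      rcases smul_eq_zero.mp hst with h4 | h4
      · exact h4
      · exact absurd h4 hz0
    have hhz : (σ * g * (σ * g)) z = (μ * μ) • z := by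
      simp only [mul_app]
      rw [hsgz, map_smul, map_smul, hsgz, smul_smul]
    have hhu : (σ * g * (σ * g)) u = (l * l) • u := by
      simp only [mul_app]
      have k1 : σ (g u) = -(l • u) := by rw [hgu, map_smul, hσu0]; module
      have k2 : σ (g (-(l • u))) = (l * l) • u := by
        simp only [map_neg, map_smul, hgu, hσu0]; module
      rw [k1, k2]
    have hmem : σ * g * (σ * g) ∈ D := D.mul_mem (D.mul_mem hσD hg) (D.mul_mem hσD hg)
    have hh1 : σ * g * (σ * g) = 1 := by
      refine flag_eq hD hliuz hliuz hmem D.one_mem ?_ ?_ rfl rfl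
      · rw [hhu, hhz, hp_smul_left (mul_pos hl hl).ne', hp_smul_right (mul_pos hμ hμ)]
      · rw [hhu, ray_smul (mul_pos hl hl)]
    have h6 := congrArg (fun d : V ≃ₗ[ℝ] V => d u) hh1
    simp only [one_app] at h6
    rw [hhu] at h6
    have h7 : (l * l - 1) • u = 0 := by linear_combination (norm := module) h6
    have hll : l * l = 1 := by
      rcases smul_eq_zero.mp h7 with h8 | h8
      · linarith
      · exact absurd h8 hu
    rcases mul_self_eq_one_iff.mp hll with h9 | h9
    · exact h9
    · exfalso; rw [h9] at hl; norm_num at hl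

end Stmt9Aux

namespace Stmt9Aux

lemma exists_li_pair {V : Type*} [AddCommGroup V] [Module ℝ V]
    (hdim : Module.finrank ℝ V = 3) {x : V} (hx : x ≠ 0) :
    ∃ y, LinearIndependent ℝ ![x, y] := by
  have hfd : FiniteDimensional ℝ V := .of_finrank_pos (by rw [hdim]; norm_num)
  obtain ⟨y, hysp⟩ : ∃ y, y ∉ Submodule.span ℝ (Set.range ![x]) := by
    by_contra hc
    push_neg at hc
    have htop : Submodule.span ℝ (Set.range ![x]) = ⊤ := Submodule.eq_top_iff'.mpr hc
    have := finrank_le_of_span_eq_top htop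
    rw [hdim] at this
    simp at this
  refine ⟨y, li_of fun s t hst => ?_⟩
  by_cases ht : t = 0
  · subst ht
    simp only [zero_smul, add_zero, smul_eq_zero] at hst
    rcases hst with h' | h'
    · exact ⟨h', rfl⟩
    · exact absurd h' hx
  · exfalso
    apply hysp
    have hy : y = (-(s / t)) • x := by
      have key : t • (y - (-(s / t)) • x) = 0 := by
        rw [smul_sub, smul_smul]
        have : t * -(s / t) = -s := by field_simp
        rw [this]
        linear_combination (norm := module) hst
      rcases smul_eq_zero.mp key with h' | h'
      · exact absurd h' ht
      · linear_combination (norm := module) h'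
    rw [hy]
    exact Submodule.smul_mem _ _ (Submodule.subset_span (by simp))

end Stmt9Aux

open Stmt9Aux

theorem stmt9 {V : Type*} [AddCommGroup V] [Module ℝ V]
    (hdim : Module.finrank ℝ V = 3)
    (D : Subgroup (V ≃ₗ[ℝ] V)) (hD : IsRotationGroup D)
    (v : V) (hv : v ≠ 0) (u : V) (hu : u ≠ 0) :
    ∃! x : V, (∃ d : V ≃ₗ[ℝ] V, d ∈ D ∧ d v = x) ∧ x ∈ Ray' u := by
  obtain ⟨w, hvw⟩ := exists_li_pair hdim hv
  obtain ⟨w', huw'⟩ := exists_li_pair hdim hu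
  obtain ⟨d, ⟨hdD, hdhp, hdray⟩, -⟩ := hD v w u w' hvw huw'
  rw [image_ray] at hdray
  have hxray : d v ∈ Ray' u := by rw [← hdray]; exact self_mem_ray _
  refine ⟨d v, ⟨⟨d, hdD, rfl⟩, hxray⟩, ?_⟩
  rintro x' ⟨⟨d', hd'D, rfl⟩, hx'ray⟩
  obtain ⟨c₁, hc₁0, h₁⟩ := hxray
  obtain ⟨c₂, hc₂0, h₂⟩ := hx'ray
  have hdv0 : d v ≠ 0 := fun h => hv ((LinearEquiv.map_eq_zero_iff d).mp h)
  have hd'v0 : d' v ≠ 0 := fun h => hv ((LinearEquiv.map_eq_zero_iff d').mp h)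
  have hc₁ne : c₁ ≠ 0 := by
    intro h0; rw [h0, zero_smul] at h₁; exact hdv0 h₁
  have hc₂ne : c₂ ≠ 0 := by
    intro h0; rw [h0, zero_smul] at h₂; exact hd'v0 h₂
  have hc₁pos : 0 < c₁ := lt_of_le_of_ne hc₁0 (Ne.symm hc₁ne)
  have hc₂pos : 0 < c₂ := lt_of_le_of_ne hc₂0 (Ne.symm hc₂ne)
  have hgval : (d * d'⁻¹) (c₂ • u) = c₁ • u := by
    rw [mul_app, ← h₂, inv_app, d'.symm_apply_apply, h₁]
  have hgu : (d * d'⁻¹) u = (c₁ / c₂) • u := by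
    have h3 : c₂ • ((d * d'⁻¹) u) = c₁ • u := by rw [← map_smul]; exact hgval
    have h4 := congrArg (fun z : V => c₂⁻¹ • z) h3
    simp only [smul_smul, inv_mul_cancel₀ hc₂ne, one_smul] at h4
    rw [h4]
    congr 1
    rw [div_eq_inv_mul]
  have hone := eigen_one hdim hD (D.mul_mem hdD (D.inv_mem hd'D)) hu
    (div_pos hc₁pos hc₂pos) hgu
  have hcc : c₁ = c₂ := by field_simp at hone; linarith
  rw [h₂, h₁, hcc]
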